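/- arXiv:1508.07158 — 6 statements merged into one kernel-verified Lean document; each statement's English description precedes it below -/
import Mathlib

section
/- Let k be a number field, let h₁(z),…,hₙ(z) be power series with coefficients in k converging in a neighborhood of 0, and let α ∈ k lie in the common domain of convergence. Suppose there exist polynomials w₁(z),…,wₙ(z) with algebraic-number coefficients, not all zero, such that w₁(z)h₁(z)+⋯+wₙ(z)hₙ(z)=0, with wᵢ(α)=0 for every i in a set I ⊆ {1,…,n}, and w_{i₀}(α)≠0 for some index i₀ ∉ I. Then there exist polynomials w′₁(z),…,w′ₙ(z) with coefficients in k, not all zero, such that w′₁(z)h₁(z)+⋯+w′ₙ(z)hₙ(z)=0, w′ᵢ(α)=0 for all i ∈ I, and w′_{i₀}(α)≠0. -/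
open scoped BigOperators

set_option maxHeartbeats 1000000 in
set_option synthInstance.maxHeartbeats 1000000 in
/-- **Descent lemma.** If power series `h i` with coefficients in a number field `k ⊆ ℂ`
converge at `α ∈ k`, and admit a nontrivial polynomial relation with algebraic-number
coefficients, with prescribed vanishing/nonvanishing at `α`, then they admit such a
relation with coefficients in `k`. -/
theorem descent_lemma
    (k : Subfield ℂ) (hk : FiniteDimensional ℚ k)
    (n : ℕ) (h : Fin n → PowerSeries ℂ)
    (hcoeff : ∀ i m, PowerSeries.coeff m (h i) ∈ k)
    (α : ℂ) (hα : α ∈ k)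
    (hconv : ∀ i, Summable fun m => ‖PowerSeries.coeff m (h i)‖ * ‖α‖ ^ m)
    (w : Fin n → Polynomial ℂ)
    (hwalg : ∀ i m, IsAlgebraic ℚ ((w i).coeff m))
    (hwne : w ≠ 0)
    (hrel : (∑ i, (w i : PowerSeries ℂ) * h i) = 0)
    (I : Set (Fin n))
    (hI : ∀ i ∈ I, (w i).eval α = 0)
    (i₀ : Fin n) (hi₀ : i₀ ∉ I) (hwi₀ : (w i₀).eval α ≠ 0) :
    ∃ w' : Fin n → Polynomial ℂ,
      (∀ i m, (w' i).coeff m ∈ k) ∧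
      w' ≠ 0 ∧
      (∑ i, (w' i : PowerSeries ℂ) * h i) = 0 ∧
      (∀ i ∈ I, (w' i).eval α = 0) ∧
      (w' i₀).eval α ≠ 0 := by
  classical
  -- the field generated over k by the coefficients of the `w i`
  set T : Set ℂ := ⋃ i : Fin n, ↑((w i).support.image ((w i).coeff)) with hT
  have hTfin : Finite T := Set.finite_iUnion (fun i => Finset.finite_toSet _)
  have hTalg : ∀ x ∈ T, IsIntegral k x := by
    intro x hx
    simp only [hT, Set.mem_iUnion, Finset.coe_image, Set.mem_image, Finset.mem_coe] at hx
    obtain ⟨i, m, -, rfl⟩ := hx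
    exact ((hwalg i m).tower_top k).isIntegral
  set L : IntermediateField k ℂ := IntermediateField.adjoin k T with hLdef
  have hLfin : FiniteDimensional k L := IntermediateField.finiteDimensional_adjoin hTalg
  have hmemL : ∀ i m, (w i).coeff m ∈ L := by
    intro i m
    by_cases hm : m ∈ (w i).support
    · apply IntermediateField.subset_adjoin
      simp only [hT, Set.mem_iUnion, Finset.coe_image, Set.mem_image, Finset.mem_coe]
      exact ⟨i, m, hm, rfl⟩
    · rw [Polynomial.notMem_support_iff.mp hm]; exact zero_mem L
  have hαL : α ∈ L := L.algebraMap_mem ⟨α, hα⟩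
  -- a k-linear projection onto L
  obtain ⟨q, hq⟩ := Submodule.exists_isCompl (Subalgebra.toSubmodule L.toSubalgebra)
  set π := Submodule.projectionOnto _ q hq with hπ
  set d := Module.finrank k L with hd
  set b : Module.Basis (Fin d) k L := Module.finBasis k L with hb
  set proj : ℂ →ₗ[k] L :=
    { toFun := fun x => ⟨(π x : ℂ), (π x).2⟩
      map_add' := by intro x y; ext; simp
      map_smul' := by intro c x; ext; simp } with hproj
  set f : Fin d → (ℂ →ₗ[k] ℂ) :=
    fun j => (Algebra.linearMap k ℂ).comp ((b.coord j).comp proj) with hf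
  have hfval : ∀ j x, f j x = ((b.repr (proj x) j : k) : ℂ) := fun j x => rfl
  have hfk : ∀ j x, f j x ∈ k := fun j x => (b.repr (proj x) j).2
  have hfmul : ∀ j (a : k) (x : ℂ), f j (↑a * x) = ↑a * f j x := by
    intro j a x
    have h1 := (f j).map_smul a x
    rwa [Subfield.smul_def, Subfield.smul_def] at h1
  have hprojL : ∀ x (hx : x ∈ L), proj x = ⟨x, hx⟩ := by
    intro x hx
    have : π x = ⟨x, hx⟩ := Submodule.projectionOnto_apply_left hq ⟨x, hx⟩
    simp [hproj, this]
  have hfzero : ∀ x ∈ L, (∀ j, f j x = 0) → x = 0 := by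
    intro x hx hfx
    have h0 : b.repr (proj x) = 0 := by
      ext j
      have h1 := hfx j
      rw [hfval] at h1
      have h2 : (b.repr (proj x) j : k) = 0 := by exact_mod_cast h1
      simpa using h2
    have : proj x = 0 := by
      have := congrArg b.repr.symm h0
      simpa using this
    rw [hprojL x hx] at this
    exact Subtype.ext_iff.mp this
  -- decompose and define candidate families
  set W : Fin d → Fin n → Polynomial ℂ :=
    fun j i => ∑ m ∈ (w i).support, Polynomial.C (f j ((w i).coeff m)) * Polynomial.X ^ m with hW
  have hWcoeff : ∀ j i m, (W j i).coeff m = f j ((w i).coeff m) := by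
    intro j i m
    rw [hW]
    by_cases hm : m ∈ (w i).support
    · simp [Polynomial.finset_sum_coeff, Polynomial.coeff_C_mul, Polynomial.coeff_X_pow,
        Finset.sum_ite_eq', hm]
    · simp [Polynomial.finset_sum_coeff, Polynomial.coeff_C_mul, Polynomial.coeff_X_pow,
        Finset.sum_ite_eq', hm, Polynomial.notMem_support_iff.mp hm]
  have hWeval : ∀ j i, (W j i).eval α = f j ((w i).eval α) := by
    intro j i
    have hα' : ∀ m : ℕ, α ^ m = ((⟨α, hα⟩ : k) ^ m : k) := by intro m; push_cast; ring
    rw [hW]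
    rw [Polynomial.eval_finset_sum]
    rw [Polynomial.eval_eq_sum, Polynomial.sum_def, map_sum]
    apply Finset.sum_congr rfl
    intro m hm
    rw [Polynomial.eval_mul, Polynomial.eval_C, Polynomial.eval_pow, Polynomial.eval_X]
    rw [mul_comm ((w i).coeff m) (α ^ m), hα', hfmul]
    exact mul_comm _ _
  have hWrel : ∀ j, (∑ i, (W j i : PowerSeries ℂ) * h i) = 0 := by
    intro j
    ext m
    rw [map_sum, map_zero]
    have key : ∀ i, (PowerSeries.coeff m) ((W j i : PowerSeries ℂ) * h i)
        = f j ((PowerSeries.coeff m) ((w i : PowerSeries ℂ) * h i)) := by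
      intro i
      rw [PowerSeries.coeff_mul, PowerSeries.coeff_mul, map_sum]
      apply Finset.sum_congr rfl
      intro pq hpq
      rw [Polynomial.coeff_coe, Polynomial.coeff_coe, hWcoeff]
      rw [mul_comm ((w i).coeff pq.1), hfmul j ⟨(PowerSeries.coeff pq.2) (h i), hcoeff i pq.2⟩]
      exact mul_comm _ _
    rw [Finset.sum_congr rfl (fun i _ => key i), ← map_sum, ← map_sum]
    rw [hrel]
    simp
  -- find the good index j
  have hevalL : (w i₀).eval α ∈ L := by
    rw [Polynomial.eval_eq_sum, Polynomial.sum_def]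
    exact sum_mem fun m _ => mul_mem (hmemL i₀ m) (pow_mem hαL m)
  have hj : ∃ j, f j ((w i₀).eval α) ≠ 0 := by
    by_contra hcon
    push_neg at hcon
    exact hwi₀ (hfzero _ hevalL hcon)
  obtain ⟨j, hj⟩ := hj
  refine ⟨W j, fun i m => ?_, ?_, hWrel j, fun i hi => ?_, ?_⟩
  · rw [hWcoeff]; exact hfk _ _
  · intro hcon
    apply hj
    rw [← hWeval j i₀, hcon]
    simp
  · rw [hWeval, hI i hi, map_zero]
  · rw [hWeval]; exact hj
end

section
/- Let K/F be a field extension that is finitely generated (as a field extension) over F. Then the relative algebraic closure F′ of F in K (the set of elements of K algebraic over F) is a finite extension of F. -/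
open IntermediateField

section Aux

variable {F K : Type*} [Field F] [Field K] [Algebra F K]

/-- Transfer algebraicity along an inclusion of coefficient rings inside `K`. -/
theorem aux_transfer {R S : Type*} [CommRing R] [CommRing S]
    [Algebra R K] [Algebra S K] (f : R →+* S)
    (h : ∀ x, algebraMap S K (f x) = algebraMap R K x) (hf : Function.Injective f)
    {a : K} (ha : IsAlgebraic R a) : IsAlgebraic S a :=
  ha.ringHom_of_comp_eq f (RingHom.id K) hf (by ext x; simpa using h x)

theorem aux_mem_ring_adjoin {B : Set K} (r : MvPolynomial B F) :
    MvPolynomial.aeval (Subtype.val : B → K) r ∈ Algebra.adjoin F B := by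
  have h1 : MvPolynomial.aeval (Subtype.val : B → K) r ∈
      Algebra.adjoin F (Set.range (Subtype.val : B → K)) := by
    rw [Algebra.adjoin_range_eq_range_aeval]
    exact ⟨r, rfl⟩
  rwa [Subtype.range_coe] at h1

/-- `IntermediateField.adjoin F B` is a fraction field of `Algebra.adjoin F B`:
an element algebraic over the field adjoin is algebraic over the ring adjoin. -/
theorem aux_isAlgebraic_ring_adjoin {B : Set K} {a : K}
    (h : IsAlgebraic (IntermediateField.adjoin F B) a) :
    IsAlgebraic (Algebra.adjoin F B) a := by
  letI : Algebra (Algebra.adjoin F B) (IntermediateField.adjoin F B) :=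
    (Subalgebra.inclusion (IntermediateField.algebra_adjoin_le_adjoin F B)).toRingHom.toAlgebra
  haveI : IsScalarTower (Algebra.adjoin F B) (IntermediateField.adjoin F B) K :=
    IsScalarTower.of_algebraMap_eq (fun _ => rfl)
  haveI : IsFractionRing (Algebra.adjoin F B) (IntermediateField.adjoin F B) := by
    constructor
    constructor
    · rintro ⟨y, hy⟩
      apply isUnit_iff_ne_zero.2
      intro h0
      have : (y : K) = 0 := congrArg Subtype.val h0
      exact nonZeroDivisors.coe_ne_zero ⟨y, hy⟩ (Subtype.ext this)
    · rintro ⟨z, hz⟩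
      obtain ⟨r, s, hrs⟩ := (IntermediateField.mem_adjoin_iff F z).1 hz
      by_cases hs : MvPolynomial.aeval (Subtype.val : B → K) s = 0
      · refine ⟨⟨0, 1⟩, ?_⟩
        apply Subtype.ext
        show z * _ = _
        rw [hs, div_zero] at hrs
        simp [hrs]
      · refine ⟨⟨⟨_, aux_mem_ring_adjoin r⟩, ⟨⟨_, aux_mem_ring_adjoin s⟩, ?_⟩⟩, ?_⟩
        · exact mem_nonZeroDivisors_of_ne_zero (fun h0 => hs (congrArg Subtype.val h0))
        · apply Subtype.ext
          show z * MvPolynomial.aeval (Subtype.val : B → K) s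
              = MvPolynomial.aeval (Subtype.val : B → K) r
          rw [hrs, div_mul_cancel₀ _ hs]
    · intro x y hxy
      have h2 := Subtype.ext_iff.mp hxy
      have hxy' : x = y := Subtype.ext h2
      exact ⟨1, by rw [hxy']⟩
  exact (IsFractionRing.isAlgebraic_iff (Algebra.adjoin F B)
    (IntermediateField.adjoin F B) K).mpr h

end Aux

section Aux2

variable {F K : Type*} [Field F] [Field K] [Algebra F K]

/-- From an algebraically independent set, elements outside a subset are
transcendental over the ring adjoin of the subset. -/
theorem aux_transcendental_adjoin {B : Set K} (hB : AlgebraicIndependent F ((↑) : B → K))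
    {t : Set K} (ht : t ⊆ B) {a : K} (haB : a ∈ B) (hat : a ∉ t) :
    Transcendental (Algebra.adjoin F t) a := by
  have h1 : AlgebraicIndependent F ((↑) : t → K) := hB.mono ht
  have hg : Function.Injective
      (fun o : Option t => (Option.elim o (⟨a, haB⟩ : B) (fun x => (⟨x, ht x.2⟩ : B)))) := by
    rintro (_ | x) (_ | y) h
    · rfl
    · exfalso
      apply hat
      have h' := Subtype.ext_iff.mp h
      rw [show a = (y : K) from h']
      exact y.2
    · exfalso
      apply hat
      have h' := Subtype.ext_iff.mp h
      rw [show a = (x : K) from h'.symm]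
      exact x.2
    · have h' := Subtype.ext_iff.mp h
      exact congrArg some (Subtype.ext h')
  have h2 : AlgebraicIndependent F (fun o : Option t => o.elim a ((↑) : t → K)) := by
    have := hB.comp _ hg
    convert this using 1
    funext o
    cases o <;> rfl
  have h3 := (h1.option_iff_transcendental a).1 h2
  rwa [Subtype.range_coe] at h3

/-- Algebraic independence is preserved when enlarging the base field by an
algebraic extension (inside `K`). -/
theorem aux_algIndep_of_isAlgebraic {B : Set K} (hB : AlgebraicIndependent F ((↑) : B → K))
    (M : IntermediateField F K) [Algebra.IsAlgebraic F M] :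
    AlgebraicIndependent M ((↑) : B → K) := by
  refine algebraicIndependent_of_finite' _ (algebraMap M K).injective ?_
  intro t ht _ _ a haB hat halg
  -- `halg : IsAlgebraic (Algebra.adjoin M t) a`; derive a contradiction.
  set E₁ : IntermediateField F K := IntermediateField.adjoin F t with hE₁
  set E₂ : IntermediateField E₁ K := IntermediateField.adjoin E₁ (M : Set K) with hE₂
  -- every element of `Algebra.adjoin M t` lies in `E₂`
  have hsub : ∀ y, y ∈ Algebra.adjoin M t → y ∈ E₂ := by
    intro y hy
    induction hy using Algebra.adjoin_induction with
    | mem x hx =>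
        have hxE₁ : x ∈ E₁ := IntermediateField.subset_adjoin F t hx
        exact E₂.algebraMap_mem ⟨x, hxE₁⟩
    | algebraMap m => exact IntermediateField.subset_adjoin E₁ (M : Set K) m.2
    | add x y _ _ hx hy => exact E₂.add_mem hx hy
    | mul x y _ _ hx hy => exact E₂.mul_mem hx hy
  have h1 : IsAlgebraic E₂ a := by
    refine aux_transfer (K := K)
      { toFun := fun x : Algebra.adjoin M t => (⟨(x : K), hsub _ x.2⟩ : E₂),
        map_one' := rfl, map_mul' := fun _ _ => rfl,
        map_zero' := rfl, map_add' := fun _ _ => rfl }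
      (fun _ => rfl) ?_ halg
    intro x y hxy
    have h' := Subtype.ext_iff.mp hxy
    exact Subtype.ext h'
  have h2 : Algebra.IsAlgebraic E₁ E₂ := by
    refine IntermediateField.isAlgebraic_adjoin ?_
    intro x hx
    have hxF : IsIntegral F x := by
      have := (Algebra.IsAlgebraic.isAlgebraic (R := F) (⟨x, hx⟩ : M)).isIntegral
      exact this.map (M.val)
    exact hxF.tower_top
  have h3 : IsAlgebraic E₁ a := by
    haveI : Algebra.IsIntegral E₁ E₂ := Algebra.isAlgebraic_iff_isIntegral.mp h2
    exact (isIntegral_trans a h1.isIntegral).isAlgebraic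
  have h4 : IsAlgebraic (Algebra.adjoin F t) a := aux_isAlgebraic_ring_adjoin h3
  exact aux_transcendental_adjoin hB ht haB hat h4

end Aux2

section Aux3

variable {F K : Type*} [Field F] [Field K] [Algebra F K]

/-- Key linear disjointness: a family in the relative algebraic closure which is
`F`-linearly independent stays linearly independent over `F(B)` for `B`
algebraically independent (over the relative algebraic closure). -/
theorem aux_LD {B : Set K}
    (hB' : AlgebraicIndependent (algebraicClosure F K) ((↑) : B → K))
    {ι : Type*} {a : ι → (algebraicClosure F K)} (ha : LinearIndependent F a) :
    LinearIndependent (IntermediateField.adjoin F B) (fun i => (a i : K)) := by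
  classical
  rw [linearIndependent_iff']
  intro s g hsum i hi
  have hrep : ∀ j : ι, ∃ r q : MvPolynomial B F,
      MvPolynomial.aeval (Subtype.val : B → K) q ≠ 0 ∧
      ((g j : K) * MvPolynomial.aeval (Subtype.val : B → K) q
        = MvPolynomial.aeval (Subtype.val : B → K) r) := by
    intro j
    obtain ⟨r, q, hrq⟩ := (IntermediateField.mem_adjoin_iff F ((g j : K))).1 (g j).2
    by_cases h0 : MvPolynomial.aeval (Subtype.val : B → K) q = 0
    · refine ⟨0, 1, by simp, ?_⟩
      rw [hrq, h0, div_zero]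
      simp
    · refine ⟨r, q, h0, ?_⟩
      rw [hrq]
      field_simp
  choose r q hq0 hgrq using hrep
  set R : ι → MvPolynomial B F := fun j => r j * ∏ k ∈ s.erase j, q k with hRdef
  have hsum' : ∑ j ∈ s, (g j : K) * (a j : K) = 0 := by
    have : ∀ j ∈ s, g j • ((a j : K)) = (g j : K) * (a j : K) := fun j _ => Algebra.smul_def _ _
    rw [← Finset.sum_congr rfl this]
    exact hsum
  have hterm : ∀ j ∈ s, (a j : K) * MvPolynomial.aeval (Subtype.val : B → K) (R j)
      = ((g j : K) * (a j : K)) * ∏ k ∈ s, MvPolynomial.aeval (Subtype.val : B → K) (q k) := by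
    intro j hj
    rw [hRdef]
    simp only [map_mul, map_prod]
    rw [← Finset.mul_prod_erase s (fun k => MvPolynomial.aeval (Subtype.val : B → K) (q k)) hj,
      ← hgrq j]
    ring
  have hsum2 : ∑ j ∈ s, (a j : K) * MvPolynomial.aeval (Subtype.val : B → K) (R j) = 0 := by
    rw [Finset.sum_congr rfl hterm, ← Finset.sum_mul, hsum', zero_mul]
  set T : MvPolynomial B (algebraicClosure F K) :=
    ∑ j ∈ s, MvPolynomial.C (a j)
      * (R j).map (algebraMap F (algebraicClosure F K)) with hTdef
  have hT : MvPolynomial.aeval (Subtype.val : B → K) T = 0 := by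
    rw [hTdef, map_sum]
    have : ∀ j ∈ s, MvPolynomial.aeval (Subtype.val : B → K)
        (MvPolynomial.C (a j) * (R j).map (algebraMap F (algebraicClosure F K)))
        = (a j : K) * MvPolynomial.aeval (Subtype.val : B → K) (R j) := by
      intro j _
      rw [map_mul, MvPolynomial.aeval_C, MvPolynomial.aeval_map_algebraMap]
      rfl
    rw [Finset.sum_congr rfl this, hsum2]
  have hT0 : T = 0 := by
    have hinj := algebraicIndependent_iff_injective_aeval.mp hB'
    apply hinj
    rw [map_zero]
    exact hT
  have hR0 : ∀ j ∈ s, R j = 0 := by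
    intro j hj
    apply MvPolynomial.ext
    intro m
    have hcoeff := congrArg (MvPolynomial.coeff m) hT0
    rw [hTdef, MvPolynomial.coeff_sum] at hcoeff
    simp only [MvPolynomial.coeff_C_mul, MvPolynomial.coeff_map, MvPolynomial.coeff_zero] at hcoeff
    have hlin := linearIndependent_iff'.mp ha s (fun k => MvPolynomial.coeff m (R k)) ?_ j hj
    · simpa using hlin
    · rw [← hcoeff]
      apply Finset.sum_congr rfl
      intro k _
      rw [Algebra.smul_def, mul_comm]
  have hRi := congrArg (MvPolynomial.aeval (Subtype.val : B → K)) (hR0 i hi)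
  rw [hRdef] at hRi
  simp only [map_mul, map_prod, map_zero] at hRi
  have hprod : ∏ k ∈ s.erase i, MvPolynomial.aeval (Subtype.val : B → K) (q k) ≠ 0 :=
    Finset.prod_ne_zero_iff.2 (fun k _ => hq0 k)
  have hri : MvPolynomial.aeval (Subtype.val : B → K) (r i) = 0 :=
    (mul_eq_zero.mp hRi).resolve_right hprod
  have hgi : (g i : K) * MvPolynomial.aeval (Subtype.val : B → K) (q i) = 0 := by
    rw [hgrq i, hri]
  have : (g i : K) = 0 := (mul_eq_zero.mp hgi).resolve_right (hq0 i)
  exact Subtype.ext this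

end Aux3

/-- If `K/F` is a finitely generated field extension, then the relative algebraic closure
of `F` in `K` (the elements of `K` algebraic, i.e. integral, over `F`) is a finite
extension of `F`. -/
theorem relAlgClosure_finiteDimensional_of_fg
    (F K : Type*) [Field F] [Field K] [Algebra F K]
    (hfg : ∃ s : Finset K, IntermediateField.adjoin F (s : Set K) = ⊤) :
    FiniteDimensional F (integralClosure F K) := by
  classical
  obtain ⟨s, hs⟩ := hfg
  obtain ⟨B, -, hmax⟩ := exists_maximal_algebraicIndependent (∅ : Set K) (s : Set K)
    (Set.empty_subset _) ((algebraicIndependent_empty_iff F K).2 (algebraMap F K).injective)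
  obtain ⟨⟨hBi, hBs⟩, hmax2⟩ := hmax
  set L : IntermediateField F K := IntermediateField.adjoin F B with hL
  -- every element of `s` is integral over `L`
  have hint : ∀ x ∈ (s : Set K), IsIntegral L x := by
    intro x hx
    by_cases hxB : x ∈ B
    · have hxL : x ∈ L := IntermediateField.subset_adjoin F B hxB
      have : IsIntegral L (algebraMap L K ⟨x, hxL⟩) := isIntegral_algebraMap
      exact this
    · by_contra hni
      have htr : Transcendental L x := fun h => hni (isAlgebraic_iff_isIntegral.mp h)
      have htr2 : Transcendental (Algebra.adjoin F B) x := by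
        intro h
        apply htr
        refine aux_transfer (K := K)
          { toFun := fun y : Algebra.adjoin F B =>
              (⟨(y : K), IntermediateField.algebra_adjoin_le_adjoin F B y.2⟩ : L),
            map_one' := rfl, map_mul' := fun _ _ => rfl,
            map_zero' := rfl, map_add' := fun _ _ => rfl }
          (fun _ => rfl) ?_ h
        intro u v huv
        have h' := Subtype.ext_iff.mp huv
        exact Subtype.ext h'
      have hopt : AlgebraicIndependent F (fun o : Option B => o.elim x ((↑) : B → K)) := by
        apply (hBi.option_iff_transcendental x).2
        rwa [show (Set.range fun i : B => id (i : K)) = B from Subtype.range_coe]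
      set Bx : Set K := insert x B with hBx
      have hins : AlgebraicIndependent F ((↑) : Bx → K) := by
        convert hopt.comp _ (Set.subtypeInsertEquivOption hxB).injective
        ext y
        by_cases h : ↑y = x <;> simp [h, Set.subtypeInsertEquivOption]
      have hle := hmax2 ⟨hins, Set.insert_subset hx hBs⟩ (Set.subset_insert x B)
      exact hxB (hle (Set.mem_insert x B))
  -- `K` is finite dimensional over `L`
  haveI hFD : FiniteDimensional L K := by
    have htop : IntermediateField.adjoin L (s : Set K) = ⊤ := by
      apply IntermediateField.restrictScalars_injective F
      rw [IntermediateField.restrictScalars_top]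
      rw [← top_le_iff, ← hs]
      exact IntermediateField.adjoin_le_iff.2
        (fun x hx => IntermediateField.subset_adjoin L (s : Set K) hx)
    haveI : Finite ((s : Set K)) := s.finite_toSet
    have hfd := IntermediateField.finiteDimensional_adjoin (K := L) (L := K)
      (S := (s : Set K)) hint
    rw [htop] at hfd
    exact IntermediateField.topEquiv.toLinearEquiv.finiteDimensional
  -- algebraic independence over the relative algebraic closure
  have hBi' : AlgebraicIndependent (algebraicClosure F K) ((↑) : B → K) :=
    aux_algIndep_of_isAlgebraic hBi (algebraicClosure F K)
  -- rank bound
  have hfin : FiniteDimensional F (algebraicClosure F K) := by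
    set b := Module.Basis.ofVectorSpace F (algebraicClosure F K) with hb
    have hli : LinearIndependent L (fun i => ((b i : algebraicClosure F K) : K)) :=
      aux_LD hBi' b.linearIndependent
    have hcard := hli.cardinal_le_rank
    have hrank : Module.rank F (algebraicClosure F K) < Cardinal.aleph0 := by
      rw [← b.mk_eq_rank'']
      exact lt_of_le_of_lt hcard (Module.rank_lt_aleph0 L K)
    exact Module.rank_lt_aleph0_iff.mp hrank
  exact Module.Finite.equiv
    ({ toFun := fun x : algebraicClosure F K => (⟨x.1, x.2⟩ : integralClosure F K),
       invFun := fun x => ⟨x.1, x.2⟩,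
       map_add' := fun _ _ => rfl, map_smul' := fun _ _ => rfl,
       left_inv := fun _ => rfl, right_inv := fun _ => rfl } :
      algebraicClosure F K ≃ₗ[F] integralClosure F K)
end

section
/- Let f₁(z),…,fₙ(z) ∈ ℚ̄[[z]] and let d be the dimension over ℚ̄(z) of the vector space Rel_{ℚ̄(z)}(f₁,…,fₙ) := {(w₁(z),…,wₙ(z)) ∈ ℚ̄(z)ⁿ : Σ wᵢ(z)fᵢ(z) = 0}. Then there exist polynomials λ_{i,j}(z) ∈ ℚ̄[z] for 1 ≤ i ≤ d, 1 ≤ j ≤ n, such that the d vectors (λ_{i,1}(z),…,λ_{i,n}(z)) form a basis of the ℚ̄[z]-module of polynomial relations among f₁,…,fₙ, and such that for every ξ ∈ ℚ̄ the d×n matrix (λ_{i,j}(ξ)) has rank exactly d. -/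
open scoped BigOperators RatFunc

/-- The `ℚ̄(z)`-linear map sending a vector of rational functions `w` to
`∑ᵢ wᵢ(z)·fᵢ(z)`, computed in the Laurent series field.  Its kernel is the space
`Rel_{ℚ̄(z)}(f₁,…,fₙ)` of `ℚ̄(z)`-linear relations among the `fᵢ`. -/
noncomputable def relMap {K : Type*} [Field K] (n : ℕ) (f : Fin n → PowerSeries K) :
    (Fin n → RatFunc K) →ₗ[RatFunc K] LaurentSeries K :=
  Fintype.linearCombination (RatFunc K)
    (fun i => ((f i : LaurentSeries K)))

set_option maxHeartbeats 1000000 in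
set_option synthInstance.maxHeartbeats 400000 in
theorem beukers_aux {K : Type*} [Field K] (n : ℕ) (f : Fin n → PowerSeries K)
    (d : ℕ)
    (hd : d = Module.finrank (RatFunc K) (LinearMap.ker (relMap n f))) :
    ∃ lam : Fin d → Fin n → Polynomial K,
      (∀ i, (∑ j, ((lam i j : PowerSeries K) * f j)) = 0) ∧
      LinearIndependent (Polynomial K) lam ∧
      (∀ w : Fin n → Polynomial K,
        (∑ j, ((w j : PowerSeries K) * f j)) = 0 →
        w ∈ Submodule.span (Polynomial K) (Set.range lam)) ∧
      (∀ ξ : K, Matrix.rank (Matrix.of fun i j => (lam i j).eval ξ) = d) := by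
  classical
  -- the polynomial relation map
  set φ : (Fin n → Polynomial K) →ₗ[Polynomial K] PowerSeries K :=
    Fintype.linearCombination (Polynomial K) f with hφdef
  have halg : ∀ p : Polynomial K,
      algebraMap (Polynomial K) (PowerSeries K) p = (p : PowerSeries K) := by
    intro p
    rw [PowerSeries.algebraMap_apply', Algebra.algebraMap_self, PowerSeries.map_id]
    rfl
  have hφ_apply : ∀ w, φ w = ∑ j, ((w j : PowerSeries K) * f j) := by
    intro w
    rw [hφdef, Fintype.linearCombination_apply]
    exact Finset.sum_congr rfl fun j _ => by rw [Algebra.smul_def, halg]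
  set M : Submodule (Polynomial K) (Fin n → Polynomial K) := LinearMap.ker φ with hM
  -- the quotient by `M` is torsion-free
  haveI : NoZeroSMulDivisors (Polynomial K) ((Fin n → Polynomial K) ⧸ M) := by
    refine ⟨fun {p x} h => ?_⟩
    rcases Submodule.Quotient.mk_surjective M x with ⟨w, rfl⟩
    by_cases hp : p = 0
    · exact Or.inl hp
    · right
      rw [← Submodule.Quotient.mk_smul] at h
      rw [Submodule.Quotient.mk_eq_zero] at h ⊢
      have h1 : φ (p • w) = 0 := h
      rw [map_smul, Algebra.smul_def, halg] at h1
      have hpz : (p : PowerSeries K) ≠ 0 := by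
        simpa [Polynomial.coe_eq_zero_iff] using hp
      rcases mul_eq_zero.mp h1 with h2 | h2
      · exact absurd h2 hpz
      · exact LinearMap.mem_ker.mpr h2
  haveI : Module.Finite (Polynomial K) ((Fin n → Polynomial K) ⧸ M) :=
    Module.Finite.of_surjective M.mkQ (Submodule.mkQ_surjective M)
  -- so `M` is a direct summand: there is a projection `π` onto `M`
  obtain ⟨s, hs⟩ := Module.projective_lifting_property M.mkQ LinearMap.id
    (Submodule.mkQ_surjective M)
  set π : (Fin n → Polynomial K) →ₗ[Polynomial K] (Fin n → Polynomial K) :=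
    LinearMap.id - s ∘ₗ M.mkQ with hπdef
  have hπ_mem : ∀ x, π x ∈ M := by
    intro x
    have h1 : M.mkQ (π x) = 0 := by
      have h2 : M.mkQ (s (M.mkQ x)) = M.mkQ x := LinearMap.congr_fun hs (M.mkQ x)
      simp only [hπdef, LinearMap.sub_apply, LinearMap.id_apply, LinearMap.comp_apply, map_sub,
        h2, sub_self]
    rwa [Submodule.mkQ_apply, Submodule.Quotient.mk_eq_zero] at h1
  have hπ_id : ∀ x ∈ M, π x = x := by
    intro x hx
    have h1 : M.mkQ x = 0 := by
      rw [Submodule.mkQ_apply, Submodule.Quotient.mk_eq_zero]; exact hx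
    simp [hπdef, h1]
  -- a basis of `M` over the PID `K[X]`
  obtain ⟨m, bM⟩ := Submodule.basisOfPid (Pi.basisFun (Polynomial K) (Fin n)) M
  -- the inclusion into rational function vectors
  set G : (Fin n → Polynomial K) →ₗ[Polynomial K] (Fin n → RatFunc K) :=
    LinearMap.pi fun j => (Algebra.linearMap (Polynomial K) (RatFunc K)).comp
      (LinearMap.proj j) with hGdef
  have hG_apply : ∀ (w : Fin n → Polynomial K) (j : Fin n),
      G w j = algebraMap (Polynomial K) (RatFunc K) (w j) := fun w j => rfl
  have hG_inj : Function.Injective G := by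
    intro a b hab
    funext j
    exact RatFunc.algebraMap_injective K (by rw [← hG_apply, ← hG_apply, hab])
  -- compatibility of the two relation maps
  have key : ∀ w : Fin n → Polynomial K,
      relMap n f (G w) = HahnSeries.ofPowerSeries ℤ K (φ w) := by
    intro w
    rw [relMap, Fintype.linearCombination_apply, hφ_apply, map_sum]
    refine Finset.sum_congr rfl fun j _ => ?_
    rw [Algebra.smul_def, hG_apply]
    have h1 : (HahnSeries.ofPowerSeries ℤ K) ((w j : PowerSeries K) * f j)
        = ((w j : PowerSeries K) : LaurentSeries K) * ((f j : LaurentSeries K)) :=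
      map_mul _ _ _
    rw [h1, RatFunc.coe_coe]
    rfl
  have hmemker : ∀ w : Fin n → Polynomial K,
      G w ∈ LinearMap.ker (relMap n f) ↔ w ∈ M := by
    intro w
    rw [LinearMap.mem_ker, key, hM, LinearMap.mem_ker]
    constructor
    · intro h
      exact HahnSeries.ofPowerSeries_injective (by rw [h, map_zero])
    · intro h; rw [h, map_zero]
  -- the image of the basis of `M`
  set e : Fin m → (Fin n → RatFunc K) := fun i => G (bM i) with hedef
  have hindep_R : LinearIndependent (Polynomial K) e := by
    have h1 : LinearIndependent (Polynomial K)
        (fun i => (G ∘ₗ M.subtype) (bM i)) := by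
      refine bM.linearIndependent.map' (G ∘ₗ M.subtype) ?_
      rw [LinearMap.ker_eq_bot]
      exact hG_inj.comp (Submodule.injective_subtype M)
    exact h1
  have hindep : LinearIndependent (RatFunc K) e :=
    hindep_R.localization (RatFunc K) (nonZeroDivisors (Polynomial K))
  -- the images span the kernel of `relMap`
  have hspan : LinearMap.ker (relMap n f)
      = Submodule.span (RatFunc K) (Set.range e) := by
    apply le_antisymm
    · intro w hw
      obtain ⟨q, hq⟩ := IsLocalization.exist_integer_multiples_of_finite
        (nonZeroDivisors (Polynomial K)) w
      have hq' : ∀ i, ∃ v : Polynomial K,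
          algebraMap (Polynomial K) (RatFunc K) v = (q : Polynomial K) • w i := by
        intro i
        obtain ⟨v, hv⟩ := hq i
        exact ⟨v, hv.trans (Submonoid.smul_def q (w i))⟩
      choose v hv using hq'
      have hGv : G v = (q : Polynomial K) • w := by
        funext j
        rw [hG_apply, hv j, Pi.smul_apply]
      have hvM : v ∈ M := by
        rw [← hmemker, hGv, ← algebraMap_smul (RatFunc K) (q : Polynomial K) w]
        exact Submodule.smul_mem _ _ hw
      -- expand `v` in the basis of `M`
      have hsum : G v = ∑ i, (bM.repr ⟨v, hvM⟩ i) • e i := by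
        have h1 : (⟨v, hvM⟩ : M) = ∑ i, bM.repr ⟨v, hvM⟩ i • bM i :=
          (bM.sum_repr _).symm
        have h2 := congrArg (fun x : M => G (M.subtype x)) h1
        simpa only [map_sum, map_smul, Submodule.subtype_apply] using h2
      have hGv_mem : G v ∈ Submodule.span (RatFunc K) (Set.range e) := by
        rw [hsum]
        refine Submodule.sum_mem _ fun i _ => ?_
        rw [← algebraMap_smul (RatFunc K)]
        exact Submodule.smul_mem _ _ (Submodule.subset_span ⟨i, rfl⟩)
      have hq0 : algebraMap (Polynomial K) (RatFunc K) (q : Polynomial K) ≠ 0 :=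
        RatFunc.algebraMap_ne_zero (nonZeroDivisors.ne_zero q.2)
      have hw_eq : w = (algebraMap (Polynomial K) (RatFunc K) (q : Polynomial K))⁻¹ • G v := by
        rw [hGv, ← algebraMap_smul (RatFunc K) (q : Polynomial K) w, inv_smul_smul₀ hq0]
      rw [hw_eq]
      exact Submodule.smul_mem _ _ hGv_mem
    · rw [Submodule.span_le]
      rintro _ ⟨i, rfl⟩
      exact (hmemker _).mpr (bM i).2
  -- hence `d = m`
  have hdm : d = m := by
    rw [hd, hspan, finrank_span_eq_card hindep, Fintype.card_fin]
  set σ : Fin d ≃ Fin m := finCongr hdm with hσdef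
  refine ⟨fun i => (bM (σ i) : Fin n → Polynomial K), ?_, ?_, ?_, ?_⟩
  · -- each row is a relation
    intro i
    rw [← hφ_apply]
    exact (bM (σ i)).2
  · -- linear independence
    have h1 : LinearIndependent (Polynomial K)
        (fun i => (M.subtype (bM i))) :=
      bM.linearIndependent.map' M.subtype (Submodule.ker_subtype M)
    exact h1.comp σ σ.injective
  · -- spanning
    intro w hw
    have hwM : w ∈ M := by
      rw [hM, LinearMap.mem_ker, hφ_apply]; exact hw
    have h1 : (⟨w, hwM⟩ : M) = ∑ i, bM.repr ⟨w, hwM⟩ i • bM i :=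
      (bM.sum_repr _).symm
    have h2 : w = ∑ i, bM.repr ⟨w, hwM⟩ i • (bM i : Fin n → Polynomial K) := by
      have h3 := congrArg (fun x : M => M.subtype x) h1
      simpa only [map_sum, map_smul, Submodule.subtype_apply] using h3
    rw [h2]
    refine Submodule.sum_mem _ fun i _ => Submodule.smul_mem _ _ ?_
    exact Submodule.subset_span ⟨σ.symm i, by simp⟩
  · -- full rank at every point
    intro ξ
    -- the coefficient matrix of the projection `π` in the basis `bM`
    set u : Fin n → M := fun j => ⟨π (Pi.single j 1), hπ_mem _⟩ with hudef
    have hident : ∀ i k : Fin m,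
        (if i = k then (1 : Polynomial K) else 0)
          = ∑ j, (bM i : Fin n → Polynomial K) j * bM.repr (u j) k := by
      intro i k
      have hpi : ∀ x : Fin n → Polynomial K,
          ∑ j, x j • (Pi.single j (1 : Polynomial K) : Fin n → Polynomial K) = x := by
        intro x
        have : ∀ j, x j • (Pi.single j (1 : Polynomial K) : Fin n → Polynomial K) = Pi.single j (x j) := by
          intro j
          rw [← Pi.single_smul, smul_eq_mul, mul_one]
        simp_rw [this]
        exact Finset.univ_sum_single x
      have hMrep : (bM i : M) = ∑ j, ((bM i : Fin n → Polynomial K) j) • u j := by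
        apply Subtype.ext
        have h1 : ((∑ j, ((bM i : Fin n → Polynomial K) j) • u j : M) :
            Fin n → Polynomial K)
            = ∑ j, ((bM i : Fin n → Polynomial K) j) • π (Pi.single j (1 : Polynomial K)) := by
          have h2 := map_sum M.subtype
            (fun j => ((bM i : Fin n → Polynomial K) j) • u j) Finset.univ
          simpa [map_smul, hudef] using h2
        rw [h1]
        have h3 : ∑ j, ((bM i : Fin n → Polynomial K) j) • π (Pi.single j 1)
            = π (∑ j, ((bM i : Fin n → Polynomial K) j) • (Pi.single j (1 : Polynomial K) : Fin n → Polynomial K)) := by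
          rw [map_sum]
          exact Finset.sum_congr rfl fun j _ => (map_smul π _ _).symm
        rw [h3, hpi, hπ_id _ (bM i).2]
      have h4 := congrArg (fun x : M => bM.repr x k) hMrep
      simp only [map_sum, map_smul] at h4
      rw [bM.repr_self] at h4
      rw [Finsupp.single_apply] at h4
      rw [h4]
      simp [Finsupp.smul_apply, smul_eq_mul]
    -- evaluate the identity at ξ
    set A : Matrix (Fin d) (Fin n) K :=
      Matrix.of fun i j => ((bM (σ i) : Fin n → Polynomial K) j).eval ξ with hAdef
    set B : Matrix (Fin n) (Fin d) K :=
      Matrix.of fun j k => (bM.repr (u j) (σ k)).eval ξ with hBdef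
    have hAB : A * B = 1 := by
      ext i k
      rw [Matrix.mul_apply, Matrix.one_apply]
      have h5 := congrArg (Polynomial.eval ξ) (hident (σ i) (σ k))
      rw [Polynomial.eval_finset_sum] at h5
      simp only [Polynomial.eval_mul, apply_ite (Polynomial.eval ξ),
        Polynomial.eval_one, Polynomial.eval_zero] at h5
      rw [hAdef, hBdef]
      simp only [Matrix.of_apply]
      rw [← h5]
      congr 1
      simp [EmbeddingLike.apply_eq_iff_eq]
    have hle : A.rank ≤ d := by
      have := A.rank_le_card_height
      simpa using this
    have hge : d ≤ A.rank := by
      have h6 := Matrix.rank_mul_le_left A B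
      rw [hAB, Matrix.rank_one] at h6
      simpa using h6
    exact le_antisymm hle hge

/-- **Beukers' linear algebra lemma.** If `d` is the dimension of the space of
`ℚ̄(z)`-linear relations among `f₁,…,fₙ ∈ ℚ̄[[z]]`, then there is a basis
`λ₁,…,λ_d` of the `ℚ̄[z]`-module of polynomial relations whose evaluation at every
`ξ ∈ ℚ̄` is a matrix of rank exactly `d`. -/
theorem beukers_basis_lemma
    (n : ℕ) (f : Fin n → PowerSeries (AlgebraicClosure ℚ))
    (d : ℕ)
    (hd : d = Module.finrank (RatFunc (AlgebraicClosure ℚ))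
      (LinearMap.ker (relMap n f))) :
    ∃ lam : Fin d → Fin n → Polynomial (AlgebraicClosure ℚ),
      -- each `lam i` is a polynomial relation among the `fⱼ`
      (∀ i, (∑ j, ((lam i j : PowerSeries (AlgebraicClosure ℚ)) * f j)) = 0) ∧
      -- they form a basis of the `ℚ̄[z]`-module of polynomial relations
      LinearIndependent (Polynomial (AlgebraicClosure ℚ)) lam ∧
      (∀ w : Fin n → Polynomial (AlgebraicClosure ℚ),
        (∑ j, ((w j : PowerSeries (AlgebraicClosure ℚ)) * f j)) = 0 →
        w ∈ Submodule.span (Polynomial (AlgebraicClosure ℚ)) (Set.range lam)) ∧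
      -- full rank at every algebraic point
      (∀ ξ : AlgebraicClosure ℚ,
        Matrix.rank (Matrix.of fun i j => (lam i j).eval ξ) = d) := by
  exact beukers_aux n f d hd
end

section
/- Let V be a finite-dimensional vector space over a field k, let C₀,…,C_{q−1} be linear endomorphisms of V, and let (G_i)_{i ≥ 0} be a sequence of vectors in V satisfying a recursion: for all i ≥ a₀, writing i = qs + j − ν with 0 ≤ j < q, one has G_i = C_j(G_{s−e+1}) with s − e + 1 < i. Define V_l := span{G₀,…,G_l}. If for some integer a ≥ (ν − d)/(q − 1) one has V_a = V_{q(a+e)−ν−1}, then V_l = V_a for all l ≥ a, i.e. the increasing chain (V_l) is constant from rank a on. -/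
/-- **Stabilization lemma.** Let `V` be a finite-dimensional vector space,
`C₀,…,C_{q−1}` endomorphisms of `V`, and `(G_i)_{i ∈ ℤ}` vectors with `G_i = 0` for
`i < 0`, satisfying the recursion: writing `i = q·s + j − ν` with `0 ≤ j < q`, one has
`G_i = C_j (G_{s−e+1})`, the predecessor index being `< i` whenever `i > a`.
Set `V_l := span{G_m : 0 ≤ m ≤ l}`.  If `a ≥ (ν−d)/(q−1)` and
`V_a = V_{q(a+e)−ν−1}`, then `V_l = V_a` for every `l ≥ a`. -/
theorem stabilization_lemma
    (k : Type*) [Field k] (V : Type*) [AddCommGroup V] [Module k V]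
    [FiniteDimensional k V]
    (q e : ℕ) (hq : 2 ≤ q) (he : 1 ≤ e)
    (ν d a : ℤ) (hν : 0 ≤ ν)
    (G : ℤ → V) (hneg : ∀ l : ℤ, l < 0 → G l = 0)
    (C : Fin q → (V →ₗ[k] V))
    -- the recursion `G_{qs+j−ν} = C_j (G_{s−e+1})`
    (hrec : ∀ i s : ℤ, ∀ j : Fin q, i = q * s + (j : ℤ) - ν →
      G i = C j (G (s - (e : ℤ) + 1)))
    -- the predecessor index decreases strictly beyond `a`
    (hdec : ∀ i s : ℤ, ∀ j : Fin q, a < i → i = q * s + (j : ℤ) - ν →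
      s - (e : ℤ) + 1 < i)
    -- `a ≥ (ν − d)/(q − 1)`
    (ha : ν - d ≤ ((q : ℤ) - 1) * a)
    -- the chain `V_l := span{G_m : 0 ≤ m ≤ l}`
    (Vl : ℤ → Submodule k V)
    (hVl : ∀ l : ℤ, Vl l = Submodule.span k (G '' {m : ℤ | 0 ≤ m ∧ m ≤ l}))
    (hstat : Vl a = Vl (q * (a + (e : ℤ)) - ν - 1)) :
    ∀ l : ℤ, a ≤ l → Vl l = Vl a := by
  have hq0 : (0:ℤ) < (q:ℤ) := by exact_mod_cast Nat.lt_of_lt_of_le Nat.zero_lt_two hq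
  -- membership of generators
  have hmem : ∀ m : ℤ, 0 ≤ m → m ≤ a → G m ∈ Vl a := by
    intro m h0 hma
    rw [hVl a]
    exact Submodule.subset_span ⟨m, ⟨h0, hma⟩, rfl⟩
  -- C j maps G t into Vl a for 0 ≤ t ≤ a
  have hCgen : ∀ (j : Fin q) (t : ℤ), 0 ≤ t → t ≤ a → C j (G t) ∈ Vl a := by
    intro j t h0 hta
    set i : ℤ := q * (t + e - 1) + (j : ℤ) - ν with hi
    have hrw : (t + (e:ℤ) - 1) - (e : ℤ) + 1 = t := by ring
    have hGi : G i = C j (G t) := by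
      have := hrec i (t + e - 1) j hi
      rwa [hrw] at this
    rw [← hGi]
    rcases lt_or_ge i 0 with hneg' | hpos
    · rw [hneg i hneg']; exact (Vl a).zero_mem
    · have hjle : (j : ℤ) ≤ (q:ℤ) - 1 := by
        have := j.isLt
        have : (j:ℤ) < (q:ℤ) := by exact_mod_cast this
        omega
      have hle : i ≤ q * (a + (e:ℤ)) - ν - 1 := by
        have h1 : (q:ℤ) * (t + e - 1) ≤ (q:ℤ) * (a + e - 1) := by
          apply mul_le_mul_of_nonneg_left (by omega) (le_of_lt hq0)
        have : (q:ℤ) * (a + e - 1) = q * (a + (e:ℤ)) - q := by ring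
        omega
      rw [hstat, hVl]
      exact Submodule.subset_span ⟨i, ⟨hpos, hle⟩, rfl⟩
  -- C j maps Vl a into Vl a
  have hC : ∀ (j : Fin q), ∀ x ∈ Vl a, C j x ∈ Vl a := by
    intro j x hx
    rw [hVl a] at hx
    induction hx using Submodule.span_induction with
    | mem x hx =>
      obtain ⟨t, ⟨h0, hta⟩, rfl⟩ := hx
      exact hCgen j t h0 hta
    | zero => simp
    | add x y _ _ hx hy => rw [map_add]; exact (Vl a).add_mem hx hy
    | smul c x _ hx => rw [map_smul]; exact (Vl a).smul_mem c hx
  -- all G m with m ≥ 0 lie in Vl a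
  have hall : ∀ n : ℕ, ∀ m : ℤ, m.toNat = n → 0 ≤ m → G m ∈ Vl a := by
    intro n
    induction n using Nat.strong_induction_on with
    | _ n ih =>
      intro m hmn h0
      rcases le_or_gt m a with hma | ham
      · exact hmem m h0 hma
      · -- write m = q*s + j - ν
        set s : ℤ := (m + ν) / q with hs
        have hj0 : 0 ≤ (m + ν) % q := Int.emod_nonneg _ (by omega)
        have hjq : (m + ν) % q < q := Int.emod_lt_of_pos _ hq0
        set j : Fin q := ⟨((m + ν) % q).toNat, by
          omega⟩ with hjdef
        have hjval : (j : ℤ) = (m + ν) % q := by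
          simp [hjdef]
          omega
        have hmeq : m = q * s + (j : ℤ) - ν := by
          rw [hjval, hs]
          have := Int.mul_ediv_add_emod (m + ν) q
          omega
        have hGm : G m = C j (G (s - (e:ℤ) + 1)) := hrec m s j hmeq
        have hlt : s - (e:ℤ) + 1 < m := hdec m s j ham hmeq
        set t : ℤ := s - (e:ℤ) + 1 with ht
        rcases lt_or_ge t 0 with htneg | htpos
        · rw [hGm, hneg t htneg, map_zero]
          exact (Vl a).zero_mem
        · have htn : t.toNat < n := by omega
          have hGt : G t ∈ Vl a := ih t.toNat htn t rfl htpos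
          rw [hGm]
          exact hC j _ hGt
  -- conclude
  intro l hl
  apply le_antisymm
  · rw [hVl l]
    rw [Submodule.span_le]
    rintro x ⟨m, ⟨h0, _⟩, rfl⟩
    exact hall m.toNat m rfl h0
  · rw [hVl l, hVl a]
    apply Submodule.span_mono
    exact Set.image_mono (fun m hm => ⟨hm.1, le_trans hm.2 hl⟩)
end

section
/- Let k be a field, q ≥ 2, and let f₁(z),…,fₙ(z) ∈ k[[z]] satisfy a Mahler system f(z) = A(z)f(z^q) with A(z) ∈ GLₙ(k(z)). Let b(z) be a common denominator so that b(z)A(z) has polynomial entries of degree at most d, and suppose additionally b(z) = z^ν is a monomial (so A(z) = z^{−ν}Ã(z) with Ã polynomial of degree ≤ d). Suppose the fᵢ are linearly dependent over k(z). Then there exists a nonzero vector (w₁(z),…,wₙ(z)) ∈ k[z]ⁿ with deg wᵢ ≤ ⌊d/(q−1)⌋ for all i and w₁(z)f₁(z) + ⋯ + wₙ(z)fₙ(z) = 0. -/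
open scoped BigOperators

/-- Substitution `z ↦ z^q` on formal power series. -/
noncomputable def expandPS {R : Type*} [CommSemiring R] (q : ℕ) (f : PowerSeries R) :
    PowerSeries R :=
  PowerSeries.mk fun n => if q ∣ n then PowerSeries.coeff (n / q) f else 0

lemma expandPS_coeff {R : Type*} [CommSemiring R] (q : ℕ) (f : PowerSeries R) (m : ℕ) :
    PowerSeries.coeff m (expandPS q f) =
      if q ∣ m then PowerSeries.coeff (m / q) f else 0 := by
  simp [expandPS]

lemma key_coeff {k : Type*} [CommRing k] {q r : ℕ} (hq : 0 < q) (hr : r < q)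
    (u v : Polynomial k) (g : PowerSeries k)
    (hv : ∀ a, v.coeff a = u.coeff (q * a + r)) (m : ℕ) :
    PowerSeries.coeff m ((v : PowerSeries k) * g) =
      PowerSeries.coeff (q * m + r) ((u : PowerSeries k) * expandPS q g) := by
  rw [PowerSeries.coeff_mul, PowerSeries.coeff_mul]
  rw [show (∑ p ∈ Finset.HasAntidiagonal.antidiagonal (q*m+r),
        PowerSeries.coeff p.1 (u : PowerSeries k) *
          PowerSeries.coeff p.2 (expandPS q g)) =
      ∑ p ∈ (Finset.HasAntidiagonal.antidiagonal (q*m+r)).filter (fun p => q ∣ p.2),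
        PowerSeries.coeff p.1 (u : PowerSeries k) *
          PowerSeries.coeff (p.2 / q) g from ?_]
  · refine Finset.sum_bij' (fun p _ => ((q * p.1 + r, q * p.2) : ℕ × ℕ))
      (fun p _ => ((m - p.2 / q, p.2 / q) : ℕ × ℕ)) ?_ ?_ ?_ ?_ ?_
    · intro p hp
      rw [Finset.HasAntidiagonal.mem_antidiagonal] at hp
      simp only [Finset.mem_filter, Finset.HasAntidiagonal.mem_antidiagonal]
      have h2 : q * p.1 + q * p.2 = q * m := by rw [← Nat.mul_add, hp]
      constructor
      · omega
      · exact Dvd.intro p.2 rfl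
    · intro p hp
      obtain ⟨p1, p2⟩ := p
      simp only [Finset.mem_filter, Finset.HasAntidiagonal.mem_antidiagonal] at hp
      obtain ⟨hsum, c, hc⟩ := hp
      rw [Finset.HasAntidiagonal.mem_antidiagonal]
      subst hc
      have hcm : c ≤ m := by nlinarith
      simp only
      rw [Nat.mul_div_cancel_left _ hq]
      omega
    · intro p hp
      rw [Finset.HasAntidiagonal.mem_antidiagonal] at hp
      have : q * p.2 / q = p.2 := Nat.mul_div_cancel_left _ hq
      ext <;> simp [this] <;> omega
    · intro p hp
      obtain ⟨p1, p2⟩ := p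
      simp only [Finset.mem_filter, Finset.HasAntidiagonal.mem_antidiagonal] at hp
      obtain ⟨hsum, c, hc⟩ := hp
      subst hc
      have hcm : c ≤ m := by nlinarith
      simp only [Nat.mul_div_cancel_left _ hq, Prod.mk.injEq]
      constructor
      · have h4 : q * (m - c) + q * c = q * m := by rw [← Nat.mul_add]; congr 1; omega
        omega
      · trivial
    · intro p hp
      rw [Finset.HasAntidiagonal.mem_antidiagonal] at hp
      simp only [Polynomial.coeff_coe, PowerSeries.coeff_mk]
      rw [hv, Nat.mul_div_cancel_left _ hq]
  · rw [Finset.sum_filter]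
    apply Finset.sum_congr rfl
    intro p _
    rw [expandPS_coeff]
    split <;> simp [*]

lemma descent {k : Type*} [Field k] {q : ℕ} (hq : 2 ≤ q) {n : ℕ}
    (f : Fin n → PowerSeries k)
    (Atil : Matrix (Fin n) (Fin n) (Polynomial k))
    (d ν : ℕ)
    (hdeg : ∀ i j, (Atil i j).natDegree ≤ d)
    (hdet : Atil.det ≠ 0)
    (hsys : ∀ i, (PowerSeries.X : PowerSeries k) ^ ν * f i =
      ∑ j, ((Atil i j : PowerSeries k) * expandPS q (f j)))
    (h : ℕ) (w : Fin n → Polynomial k) (hw0 : w ≠ 0)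
    (hwd : ∀ i, (w i).natDegree ≤ h)
    (hrel : (∑ i, ((w i : PowerSeries k) * f i)) = 0) :
    ∃ v : Fin n → Polynomial k, v ≠ 0 ∧ (∀ i, (v i).natDegree ≤ (h + d) / q) ∧
      (∑ i, ((v i : PowerSeries k) * f i)) = 0 := by
  have hq0 : 0 < q := by omega
  set u : Fin n → Polynomial k := Matrix.vecMul w Atil with hu_def
  have hu_apply : ∀ j, u j = ∑ i, w i * Atil i j := by
    intro j
    simp [hu_def, Matrix.vecMul, dotProduct]
  -- u ≠ 0
  have hu0 : u ≠ 0 := by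
    intro hz
    apply hw0
    have h1 : Matrix.vecMul u (Atil.adjugate) = Matrix.vecMul w (Atil * Atil.adjugate) :=
      (Matrix.vecMul_vecMul w Atil Atil.adjugate)
    rw [hz, Matrix.zero_vecMul, Matrix.mul_adjugate] at h1
    have h2 : Atil.det • w = 0 := by
      rw [← h1.symm]
      funext i
      simp [Matrix.vecMul, dotProduct, Matrix.smul_apply, Matrix.one_apply,
        mul_ite, Finset.sum_ite_eq', mul_comm]
    funext i
    have h3 : Atil.det * w i = 0 := congrFun h2 i
    rcases mul_eq_zero.mp h3 with hc | hc
    · exact absurd hc hdet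
    · exact hc
  -- degree bound on u
  have hudeg : ∀ j, (u j).natDegree ≤ h + d := by
    intro j
    rw [hu_apply]
    apply Polynomial.natDegree_sum_le_of_forall_le
    intro i _
    exact (Polynomial.natDegree_mul_le).trans (add_le_add (hwd i) (hdeg i j))
  -- relation for u against expanded series
  have hurel : (∑ j, ((u j : PowerSeries k) * expandPS q (f j))) = 0 := by
    have e1 : ∀ j, ((u j : PowerSeries k)) = ∑ i, (w i : PowerSeries k) * (Atil i j : PowerSeries k) := by
      intro j
      rw [hu_apply, ← Polynomial.coeToPowerSeries.ringHom_apply, map_sum]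
      exact Finset.sum_congr rfl fun i _ => by
        rw [map_mul, Polynomial.coeToPowerSeries.ringHom_apply,
          Polynomial.coeToPowerSeries.ringHom_apply]
    calc ∑ j, ((u j : PowerSeries k) * expandPS q (f j))
        = ∑ j, ∑ i, (w i : PowerSeries k) * ((Atil i j : PowerSeries k) * expandPS q (f j)) := by
          refine Finset.sum_congr rfl fun j _ => ?_
          rw [e1, Finset.sum_mul]
          exact Finset.sum_congr rfl fun i _ => mul_assoc _ _ _
      _ = ∑ i, (w i : PowerSeries k) * ∑ j, ((Atil i j : PowerSeries k) * expandPS q (f j)) := by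
          rw [Finset.sum_comm]
          exact Finset.sum_congr rfl fun i _ => (Finset.mul_sum _ _ _).symm
      _ = ∑ i, (w i : PowerSeries k) * ((PowerSeries.X : PowerSeries k) ^ ν * f i) := by
          exact Finset.sum_congr rfl fun i _ => by rw [← hsys]
      _ = (PowerSeries.X : PowerSeries k) ^ ν * ∑ i, ((w i : PowerSeries k) * f i) := by
          rw [Finset.mul_sum]
          exact Finset.sum_congr rfl fun i _ => by ring
      _ = 0 := by rw [hrel, mul_zero]
  -- pick a nonzero coefficient
  obtain ⟨j0, hj0⟩ : ∃ j, u j ≠ 0 := by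
    by_contra hc
    push_neg at hc
    exact hu0 (funext hc)
  obtain ⟨N, hN⟩ : ∃ N, (u j0).coeff N ≠ 0 := by
    by_contra hc
    push_neg at hc
    exact hj0 (Polynomial.ext hc)
  set r : ℕ := N % q with hr_def
  have hr : r < q := Nat.mod_lt _ hq0
  -- define v
  set v : Fin n → Polynomial k := fun j =>
    ∑ m ∈ Finset.range (h + d + 1), Polynomial.C ((u j).coeff (q * m + r)) * Polynomial.X ^ m
    with hv_def
  have hvcoeff : ∀ j a, (v j).coeff a = (u j).coeff (q * a + r) := by
    intro j a
    rw [hv_def]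
    simp only [Polynomial.finset_sum_coeff, Polynomial.coeff_C_mul, Polynomial.coeff_X_pow,
      mul_ite, mul_one, mul_zero]
    rw [Finset.sum_ite_eq (Finset.range (h + d + 1)) a]
    split
    · rfl
    · rename_i ha
      rw [Finset.mem_range] at ha
      symm
      apply Polynomial.coeff_eq_zero_of_natDegree_lt
      have h2a : 2 * a ≤ q * a := Nat.mul_le_mul_right a hq
      have := hudeg j
      omega
  have hvdeg : ∀ j, (v j).natDegree ≤ (h + d) / q := by
    intro j
    rw [Polynomial.natDegree_le_iff_coeff_eq_zero]
    intro a ha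
    rw [hvcoeff]
    apply Polynomial.coeff_eq_zero_of_natDegree_lt
    have : h + d < a * q := (Nat.div_lt_iff_lt_mul hq0).mp ha
    have := hudeg j
    nlinarith
  have hv0 : v ≠ 0 := by
    intro hz
    apply hN
    have : (v j0).coeff (N / q) = 0 := by rw [congrFun hz j0]; simp
    rw [hvcoeff] at this
    rwa [Nat.div_add_mod N q] at this
  refine ⟨v, hv0, hvdeg, ?_⟩
  ext m
  rw [map_sum, map_zero]
  calc ∑ j, PowerSeries.coeff m ((v j : PowerSeries k) * f j)
      = ∑ j, PowerSeries.coeff (q * m + r) ((u j : PowerSeries k) * expandPS q (f j)) :=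
        Finset.sum_congr rfl fun j _ => key_coeff hq0 hr (u j) (v j) (f j) (hvcoeff j) m
    _ = PowerSeries.coeff (q * m + r) (∑ j, ((u j : PowerSeries k) * expandPS q (f j))) :=
        (map_sum _ _ _).symm
    _ = 0 := by rw [hurel, map_zero]

lemma exists_poly_rel {k : Type*} [Field k] {n : ℕ} (f : Fin n → PowerSeries k)
    (hdep : ∃ w : Fin n → RatFunc k, w ≠ 0 ∧
      (∑ i, (w i : LaurentSeries k) * ((f i : LaurentSeries k))) = 0) :
    ∃ p : Fin n → Polynomial k, p ≠ 0 ∧ (∑ i, ((p i : PowerSeries k) * f i)) = 0 := by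
  obtain ⟨w, hw0, hrel⟩ := hdep
  set p : Fin n → Polynomial k := fun i =>
    (w i).num * ∏ j ∈ Finset.univ.erase i, (w j).denom with hp_def
  have key : ∀ i, (algebraMap (Polynomial k) (RatFunc k)) (p i) =
      w i * algebraMap (Polynomial k) (RatFunc k) (∏ j, (w j).denom) := by
    intro i
    have hsplit : (∏ j, (w j).denom) = (w i).denom * ∏ j ∈ Finset.univ.erase i, (w j).denom :=
      (Finset.mul_prod_erase Finset.univ _ (Finset.mem_univ i)).symm
    have hnum : algebraMap (Polynomial k) (RatFunc k) (w i).num =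
        w i * algebraMap (Polynomial k) (RatFunc k) (w i).denom := by
      have hd : algebraMap (Polynomial k) (RatFunc k) (w i).denom ≠ 0 :=
        RatFunc.algebraMap_ne_zero (RatFunc.denom_ne_zero _)
      exact (div_eq_iff hd).mp (RatFunc.num_div_denom (w i))
    rw [hp_def]
    simp only [map_mul, hsplit, hnum]
    ring
  refine ⟨p, ?_, ?_⟩
  · -- nonzero
    obtain ⟨i0, hi0⟩ : ∃ i, w i ≠ 0 := by
      by_contra hc
      push_neg at hc
      exact hw0 (funext hc)
    intro hz
    have : p i0 = 0 := congrFun hz i0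
    rw [hp_def] at this
    rcases mul_eq_zero.mp this with hc | hc
    · exact RatFunc.num_ne_zero hi0 hc
    · rw [Finset.prod_eq_zero_iff] at hc
      obtain ⟨j, _, hj⟩ := hc
      exact RatFunc.denom_ne_zero (w j) hj
  · -- the relation
    apply HahnSeries.ofPowerSeries_injective (Γ := ℤ)
    rw [map_sum, map_zero]
    have step : ∀ i, (HahnSeries.ofPowerSeries ℤ k) ((p i : PowerSeries k) * f i) =
        ((w i : LaurentSeries k) *
          (((∏ j, (w j).denom : Polynomial k) : RatFunc k) : LaurentSeries k)) *
          (f i : LaurentSeries k) := by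
      intro i
      rw [map_mul]
      congr 1
      have h1 : (HahnSeries.ofPowerSeries ℤ k) ((p i : PowerSeries k)) =
          (((p i : Polynomial k) : RatFunc k) : LaurentSeries k) :=
        (RatFunc.coe_coe (p i)).symm ▸ rfl
      rw [h1]
      have h2 : ((p i : Polynomial k) : RatFunc k) =
          w i * (((∏ j, (w j).denom : Polynomial k) : RatFunc k)) := key i
      rw [h2, map_mul]
    calc ∑ i, (HahnSeries.ofPowerSeries ℤ k) ((p i : PowerSeries k) * f i)
        = ∑ i, ((w i : LaurentSeries k) *
            (((∏ j, (w j).denom : Polynomial k) : RatFunc k) : LaurentSeries k)) *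
            (f i : LaurentSeries k) := Finset.sum_congr rfl fun i _ => step i
      _ = (((∏ j, (w j).denom : Polynomial k) : RatFunc k) : LaurentSeries k) *
            ∑ i, (w i : LaurentSeries k) * (f i : LaurentSeries k) := by
          rw [Finset.mul_sum]
          exact Finset.sum_congr rfl fun i _ => by ring
      _ = 0 := by rw [hrel, mul_zero]

/-- **Small-degree relation lemma.** If `f₁,…,fₙ ∈ k[[z]]` satisfy a Mahler system
`z^ν f(z) = Ã(z) f(z^q)` with `Ã` a polynomial matrix of degree `≤ d` and `det Ã ≠ 0`
(i.e. `f(z) = A(z) f(z^q)` with `A = z^{−ν}Ã ∈ GLₙ(k(z))`), and if the `fᵢ` are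
linearly dependent over `k(z)`, then there is a nonzero polynomial relation
`∑ wᵢ(z) fᵢ(z) = 0` with `deg wᵢ ≤ ⌊d/(q−1)⌋`. -/
theorem small_degree_relation
    (k : Type*) [Field k]
    (q : ℕ) (hq : 2 ≤ q)
    (n : ℕ) (f : Fin n → PowerSeries k)
    (Atil : Matrix (Fin n) (Fin n) (Polynomial k))
    (d ν : ℕ)
    (hdeg : ∀ i j, (Atil i j).natDegree ≤ d)
    (hdet : Atil.det ≠ 0)
    (hsys : ∀ i, (PowerSeries.X : PowerSeries k) ^ ν * f i =
      ∑ j, ((Atil i j : PowerSeries k) * expandPS q (f j)))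
    -- the `fᵢ` are linearly dependent over `k(z)`
    (hdep : ∃ w : Fin n → RatFunc k, w ≠ 0 ∧
      (∑ i, (w i : LaurentSeries k) * ((f i : LaurentSeries k))) = 0) :
    ∃ w : Fin n → Polynomial k, w ≠ 0 ∧
      (∀ i, (w i).natDegree ≤ d / (q - 1)) ∧
      (∑ i, ((w i : PowerSeries k) * f i)) = 0 := by
  have hq0 : 0 < q := by omega
  set P : ℕ → Prop := fun h => ∃ w : Fin n → Polynomial k, w ≠ 0 ∧
      (∀ i, (w i).natDegree ≤ h) ∧ (∑ i, ((w i : PowerSeries k) * f i)) = 0 with hP_def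
  have hex : ∃ h, P h := by
    obtain ⟨p, hp0, hprel⟩ := exists_poly_rel f hdep
    exact ⟨Finset.univ.sup fun i => (p i).natDegree, p, hp0,
      fun i => Finset.le_sup (f := fun i => (p i).natDegree) (Finset.mem_univ i), hprel⟩
  classical
  set h₀ : ℕ := Nat.find hex with hh0
  obtain ⟨w, hw0, hwd, hrel⟩ : P h₀ := Nat.find_spec hex
  have hdesc : P ((h₀ + d) / q) := by
    obtain ⟨v, hv0, hvd, hvrel⟩ :=
      descent hq f Atil d ν hdeg hdet hsys h₀ w hw0 hwd hrel
    exact ⟨v, hv0, hvd, hvrel⟩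
  have hle : h₀ ≤ (h₀ + d) / q := Nat.find_le hdesc
  have hmul : h₀ * q ≤ h₀ + d := (Nat.le_div_iff_mul_le hq0).mp hle
  have hfin : h₀ ≤ d / (q - 1) := by
    rw [Nat.le_div_iff_mul_le (by omega : 0 < q - 1)]
    have : h₀ * (q - 1) + h₀ = h₀ * q := by
      rw [← Nat.mul_succ]
      congr 1
      omega
    omega
  exact ⟨w, hw0, fun i => le_trans (hwd i) hfin, hrel⟩
end

section
/- Let aₙ ∈ {0,1} be defined by aₙ = 1 iff the base-3 expansion of n contains an odd number of digits 2, and set f₁(z)=Σaₙzⁿ, f₂(z)=Σ(1−aₙ)zⁿ ∈ ℚ[[z]]. Then f₁ and f₂ are linearly independent over ℚ(z): there is no nonzero pair (w₁(z), w₂(z)) ∈ ℚ(z)² with w₁(z)f₁(z)+w₂(z)f₂(z)=0. -/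
/-- `aSeq n = 1` iff the base-3 expansion of `n` contains an odd number of digits `2`. -/
def aSeq (n : ℕ) : ℕ := ((Nat.digits 3 n).count 2) % 2

def count2 (n : ℕ) : ℕ := (Nat.digits 3 n).count 2

lemma count2_step (m : ℕ) :
    count2 m = (if m % 3 = 2 then 1 else 0) + count2 (m / 3) := by
  rcases Nat.eq_zero_or_pos m with h | h
  · subst h; simp [count2]
  · unfold count2
    rw [Nat.digits_def' (by norm_num) h]
    by_cases h2 : m % 3 = 2 <;> simp [List.count_cons, h2, add_comm]

lemma count2_block : ∀ k n d : ℕ, n < 3 ^ k →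
    count2 (n + d * 3 ^ k) = count2 d + count2 n := by
  intro k
  induction k with
  | zero => intro n d hn; interval_cases n; simp [count2]
  | succ k ih =>
    intro n d hn
    have he : d * 3 ^ (k+1) = 3 * (d * 3 ^ k) := by ring
    rw [count2_step (n + d * 3 ^ (k+1)), count2_step n, he]
    have h1 : (n + 3 * (d * 3 ^ k)) % 3 = n % 3 := by omega
    have h2 : (n + 3 * (d * 3 ^ k)) / 3 = n / 3 + d * 3 ^ k := by omega
    have hn3 : n / 3 < 3 ^ k := by
      have : (3:ℕ) ^ (k+1) = 3 * 3 ^ k := by ring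
      omega
    rw [h1, h2, ih (n/3) d hn3]
    ring

lemma count2_one : count2 1 = 0 := by simp [count2]
lemma count2_two : count2 2 = 1 := by simp [count2]

lemma pow3_mod {T k p : ℕ} (h : 3^(k+p) ≡ 3^k [MOD T]) :
    ∀ i, 3^(k+i*p) ≡ 3^k [MOD T] := by
  intro i
  induction i with
  | zero => simp [Nat.ModEq.refl]
  | succ i ih =>
    have : 3^(k+(i+1)*p) = 3^(k+i*p) * 3^p := by ring
    rw [this]
    calc 3^(k+i*p) * 3^p ≡ 3^k * 3^p [MOD T] := Nat.ModEq.mul_right _ ih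
    _ = 3^(k+p) := by ring
    _ ≡ 3^k [MOD T] := h

lemma exists_pow3_pair (T K : ℕ) (hT : 0 < T) :
    ∃ k p, K ≤ k ∧ 0 < p ∧ 3^(k+p) ≡ 3^k [MOD T] := by
  have hmap : ∀ j ∈ Finset.range (T+1), 3^(K+j) % T ∈ Finset.range T := by
    intro j _; exact Finset.mem_range.2 (Nat.mod_lt _ hT)
  obtain ⟨j, hj, j', hj', hne, heq⟩ :=
    Finset.exists_ne_map_eq_of_card_lt_of_maps_to
      (by simp) hmap
  rcases Nat.lt_or_ge j j' with hlt | hge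
  · exact ⟨K + j, j' - j, Nat.le_add_right _ _, by omega,
      by unfold Nat.ModEq; rw [show K + j + (j' - j) = K + j' by omega]; omega⟩
  · have hlt : j' < j := by omega
    exact ⟨K + j', j - j', Nat.le_add_right _ _, by omega,
      by unfold Nat.ModEq; rw [show K + j' + (j - j') = K + j by omega]; omega⟩

/-- `Dseq p t` has base-3 digits: one `2` and `t` ones (at positions `0, p, 2p, …`). -/
def Dseq (p : ℕ) : ℕ → ℕ
  | 0 => 2
  | t+1 => Dseq p t + 3^((t+1)*p)

lemma Dseq_lt {p : ℕ} (hp : 0 < p) : ∀ t, Dseq p t < 3^(t*p+1) := by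
  intro t
  induction t with
  | zero => simpa [Dseq] using by norm_num
  | succ t ih =>
    have h1 : t*p+1 ≤ (t+1)*p := by nlinarith
    have h2 : (3:ℕ)^(t*p+1) ≤ 3^((t+1)*p) := Nat.pow_le_pow_right (by norm_num) h1
    have h3 : (3:ℕ)^((t+1)*p) + 3^((t+1)*p) < 3^((t+1)*p+1) := by
      have : (3:ℕ)^((t+1)*p+1) = 3 * 3^((t+1)*p) := by ring
      omega
    calc Dseq p (t+1) = Dseq p t + 3^((t+1)*p) := rfl
    _ < 3^(t*p+1) + 3^((t+1)*p) := by omega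
    _ < 3^((t+1)*p+1) := by omega

lemma count2_Dseq {p : ℕ} (hp : 0 < p) : ∀ t, count2 (Dseq p t) = 1 := by
  intro t
  induction t with
  | zero => exact count2_two
  | succ t ih =>
    have hlt : Dseq p t < 3^((t+1)*p) := by
      have h1 : t*p+1 ≤ (t+1)*p := by nlinarith
      exact lt_of_lt_of_le (Dseq_lt hp t) (Nat.pow_le_pow_right (by norm_num) h1)
    have : Dseq p (t+1) = Dseq p t + 1 * 3^((t+1)*p) := by simp [Dseq]
    rw [this, count2_block _ _ _ hlt, count2_one, ih]

lemma Dseq_mod {T k p : ℕ} (h : 3^(k+p) ≡ 3^k [MOD T]) :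
    ∀ t, Dseq p t * 3^k ≡ (2+t) * 3^k [MOD T] := by
  intro t
  induction t with
  | zero => exact Nat.ModEq.rfl
  | succ t ih =>
    have he : Dseq p (t+1) * 3^k = Dseq p t * 3^k + 3^(k+(t+1)*p) := by
      show (Dseq p t + 3^((t+1)*p)) * 3^k = _
      ring
    rw [he]
    calc Dseq p t * 3^k + 3^(k+(t+1)*p)
        ≡ (2+t) * 3^k + 3^k [MOD T] := Nat.ModEq.add ih (pow3_mod h (t+1))
    _ = (2+(t+1)) * 3^k := by ring

lemma aSeq_not_periodic {T N : ℕ} (hT : 0 < T)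
    (h : ∀ n, N ≤ n → aSeq (n + T) = aSeq n) : False := by
  have hmul : ∀ s, aSeq (N + s * T) = aSeq N := by
    intro s
    induction s with
    | zero => simp
    | succ s ih =>
      have : N + (s+1) * T = (N + s * T) + T := by ring
      rw [this, h _ (by omega), ih]
  -- find a suitable power pair
  obtain ⟨k, p, hk, hp, hcong⟩ := exists_pow3_pair T (N+1) hT
  have hNk : N < 3^k := by
    have h1 : N < 2^N := Nat.lt_two_pow_self
    have h2 : (2:ℕ)^N ≤ 3^N := Nat.pow_le_pow_left (by norm_num) N
    have h3 : (3:ℕ)^N ≤ 3^k := Nat.pow_le_pow_right (by norm_num) (by omega)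
    omega
  set D := Dseq p (T-2) with hD
  have hdvd : T ∣ D * 3^k := by
    rcases Nat.lt_or_ge T 2 with h2 | h2
    · have : T = 1 := by omega
      rw [this]; exact one_dvd _
    · have := Dseq_mod hcong (T-2)
      have he : 2 + (T-2) = T := by omega
      rw [he] at this
      have : D * 3^k ≡ 0 [MOD T] := this.trans (Nat.modEq_zero_iff_dvd.2 ⟨3^k, rfl⟩)
      exact (Nat.modEq_zero_iff_dvd).1 this
    
  obtain ⟨s, hs⟩ := hdvd
  have h1 : aSeq (N + D * 3^k) = aSeq N := by
    rw [hs, mul_comm]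
    exact hmul s
  have h2 : count2 (N + D * 3^k) = 1 + count2 N := by
    rw [count2_block _ _ _ hNk, count2_Dseq hp]
  have ha : ∀ n, aSeq n = count2 n % 2 := fun n => rfl
  rw [ha, ha, h2] at h1
  omega

/-- Generating series of `aSeq`. -/
noncomputable def fOne : PowerSeries ℚ := PowerSeries.mk fun n => (aSeq n : ℚ)

/-- Generating series of `1 − aSeq`. -/
noncomputable def fTwo : PowerSeries ℚ := PowerSeries.mk fun n => 1 - (aSeq n : ℚ)

lemma aSeq_lt_two (n : ℕ) : aSeq n < 2 := Nat.mod_lt _ (by norm_num)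

lemma window_pigeonhole {L m₀ : ℕ}
    (H : ∀ m m', m₀ ≤ m → m₀ ≤ m' → (∀ i, i < L → aSeq (m+i) = aSeq (m'+i)) →
      aSeq (m+L) = aSeq (m'+L)) : False := by
  classical
  set W : ℕ → (Fin L → Fin 2) := fun m i => ⟨aSeq (m + i), aSeq_lt_two _⟩ with hW
  have hmap : ∀ x ∈ (Finset.range (2^L+1)).image (fun j => j + m₀),
      W x ∈ (Finset.univ : Finset (Fin L → Fin 2)) := fun x _ => Finset.mem_univ _
  have hcard : (Finset.univ : Finset (Fin L → Fin 2)).card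
      < ((Finset.range (2^L+1)).image (fun j => j + m₀)).card := by
    rw [Finset.card_image_of_injective _ (fun a b hab => by omega)]
    simp [Fintype.card_fun]
  obtain ⟨x, hx, y, hy, hne, hWeq⟩ :=
    Finset.exists_ne_map_eq_of_card_lt_of_maps_to hcard hmap
  have hxm : m₀ ≤ x := by
    obtain ⟨j, -, rfl⟩ := Finset.mem_image.1 hx; omega
  have hym : m₀ ≤ y := by
    obtain ⟨j, -, rfl⟩ := Finset.mem_image.1 hy; omega
  -- wlog x < y
  obtain ⟨m, m', hm, hm', hlt, hweq⟩ :
      ∃ m m', m₀ ≤ m ∧ m₀ ≤ m' ∧ m < m' ∧ W m = W m' := by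
    rcases Nat.lt_or_ge x y with hl | hl
    · exact ⟨x, y, hxm, hym, hl, hWeq⟩
    · exact ⟨y, x, hym, hxm, by omega, hWeq.symm⟩
  have key : ∀ t, aSeq (m + t) = aSeq (m' + t) := by
    intro t
    induction t using Nat.strong_induction_on with
    | _ t ih =>
      rcases Nat.lt_or_ge t L with htL | htL
      · have := congrFun hweq ⟨t, htL⟩
        simpa [hW] using congrArg Fin.val this
      · have hwin : ∀ i, i < L → aSeq (m + (t - L) + i) = aSeq (m' + (t - L) + i) := by
          intro i hi
        
          have e1 : m + (t - L) + i = m + (t - L + i) := by omega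
          have e2 : m' + (t - L) + i = m' + (t - L + i) := by omega
          rw [e1, e2]
          exact ih _ (by omega)
        have := H (m + (t - L)) (m' + (t - L)) (by omega) (by omega) hwin
        have e1 : m + (t - L) + L = m + t := by omega
        have e2 : m' + (t - L) + L = m' + t := by omega
        rwa [e1, e2] at this
  refine aSeq_not_periodic (T := m' - m) (N := m) (by omega) ?_
  intro n hn
  have e1 : n + (m' - m) = m' + (n - m) := by omega
  have e2 : n = m + (n - m) := by omega
  rw [e1]
  conv_rhs => rw [e2]
  exact (key (n - m)).symm

lemma no_poly_relation (q p : Polynomial ℚ)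
    (h : (q : PowerSeries ℚ) * fOne = (p : PowerSeries ℚ)) : q = 0 := by
  by_contra hq
  set d := q.natDegree with hd
  set j0 := q.natTrailingDegree with hj0
  have hj0d : j0 ≤ d := Polynomial.natTrailingDegree_le_natDegree q
  have hc0 : q.coeff j0 ≠ 0 := by
    rw [← Polynomial.trailingCoeff]
    exact Polynomial.trailingCoeff_nonzero_iff_nonzero.2 hq
  set L := d - j0 with hL
  set m₀ := p.natDegree + 1 with hm₀
  have key : ∀ m, m₀ ≤ m →
      ∑ j ∈ Finset.range (d+1), q.coeff j * (aSeq (m + d - j) : ℚ) = 0 := by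
    intro m hm
    have h1 := congrArg (PowerSeries.coeff (m+d)) h
    rw [PowerSeries.coeff_mul, Finset.Nat.sum_antidiagonal_eq_sum_range_succ_mk,
      Polynomial.coeff_coe, Polynomial.coeff_eq_zero_of_natDegree_lt (by omega)] at h1
    simp only [Polynomial.coeff_coe, fOne, PowerSeries.coeff_mk] at h1
    rw [← h1]
    exact Finset.sum_subset
      (Finset.range_subset_range.2 (by omega))
      (fun j _ hj => by
        rw [Polynomial.coeff_eq_zero_of_natDegree_lt
          (by simpa using Finset.mem_range.not.1 hj), zero_mul])
  refine window_pigeonhole (L := L) (m₀ := m₀) ?_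
  intro m m' hm hm' hwin
  have e1 := key m hm
  have e2 := key m' hm'
  have e3 : ∑ j ∈ Finset.range (d+1),
      q.coeff j * ((aSeq (m + d - j) : ℚ) - (aSeq (m' + d - j) : ℚ)) = 0 := by
    simp only [mul_sub, Finset.sum_sub_distrib, e1, e2, sub_zero]
  rw [Finset.sum_eq_single j0 (fun b hb hbne => ?_) (fun hj0mem => ?_)] at e3
  · have : (aSeq (m + d - j0) : ℚ) = (aSeq (m' + d - j0) : ℚ) := by
      have := mul_eq_zero.1 e3
      rcases this with h' | h'
      · exact absurd h' hc0
      · linarith [sub_eq_zero.1 h']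
    have hnat : aSeq (m + d - j0) = aSeq (m' + d - j0) := Nat.cast_injective this
    have f1 : m + d - j0 = m + L := by omega
    have f2 : m' + d - j0 = m' + L := by omega
    rwa [f1, f2] at hnat
  · rcases Nat.lt_or_ge b j0 with hbl | hbl
    · rw [Polynomial.coeff_eq_zero_of_lt_natTrailingDegree hbl, zero_mul]
    · have hbd : b ≤ d := by simpa [Nat.lt_succ_iff] using Finset.mem_range.1 hb
      have hblt : j0 < b := by omega
      have : aSeq (m + d - b) = aSeq (m' + d - b) := by
        have e1 : m + d - b = m + (d - b) := by omega
        have e2 : m' + d - b = m' + (d - b) := by omega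
        rw [e1, e2]
        exact hwin (d - b) (by omega)
      rw [this, sub_self, mul_zero]
  · exact absurd (Finset.mem_range.2 (by omega)) hj0mem

lemma geo_mul : ((1 : PowerSeries ℚ) - PowerSeries.X) * PowerSeries.mk (fun _ => (1:ℚ)) = 1 := by
  ext n
  rw [sub_mul, one_mul, map_sub]
  cases n with
  | zero => simp
  | succ n => simp [PowerSeries.coeff_succ_X_mul, PowerSeries.coeff_mk, PowerSeries.coeff_one]

lemma sum_fOne_fTwo : fOne + fTwo = PowerSeries.mk (fun _ => (1:ℚ)) := by
  ext n
  simp [fOne, fTwo, PowerSeries.coeff_mk]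

/-- `f₁` and `f₂` are linearly independent over `ℚ(z)`: there is no nonzero pair of
rational functions `(w₁,w₂)` with `w₁(z)f₁(z) + w₂(z)f₂(z) = 0`. -/
theorem thueMorse_variant_linearIndependent :
    ∀ w₁ w₂ : RatFunc ℚ,
      (w₁ : LaurentSeries ℚ) * ((fOne : LaurentSeries ℚ))
        + (w₂ : LaurentSeries ℚ) * ((fTwo : LaurentSeries ℚ)) = 0 →
      w₁ = 0 ∧ w₂ = 0 := by
  intro w₁ w₂ h
  set P₁ : Polynomial ℚ := w₁.num * w₂.denom with hP₁
  set P₂ : Polynomial ℚ := w₂.num * w₁.denom with hP₂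
  set Dq : Polynomial ℚ := w₁.denom * w₂.denom with hDq
  have hn1 : algebraMap (Polynomial ℚ) (RatFunc ℚ) w₁.denom * w₁
      = algebraMap _ _ w₁.num := by
    have h0 := RatFunc.num_div_denom w₁
    rw [div_eq_iff (RatFunc.algebraMap_ne_zero (RatFunc.denom_ne_zero w₁))] at h0
    rw [mul_comm]; exact h0.symm
  have hn2 : algebraMap (Polynomial ℚ) (RatFunc ℚ) w₂.denom * w₂
      = algebraMap _ _ w₂.num := by
    have h0 := RatFunc.num_div_denom w₂
    rw [div_eq_iff (RatFunc.algebraMap_ne_zero (RatFunc.denom_ne_zero w₂))] at h0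
    rw [mul_comm]; exact h0.symm
  have e₁ : algebraMap (Polynomial ℚ) (RatFunc ℚ) Dq * w₁ = algebraMap _ _ P₁ := by
    rw [hDq, hP₁, map_mul, map_mul, mul_right_comm, hn1, mul_comm]
  have e₂ : algebraMap (Polynomial ℚ) (RatFunc ℚ) Dq * w₂ = algebraMap _ _ P₂ := by
    rw [hDq, hP₂, map_mul, map_mul, mul_assoc, hn2, mul_comm]
  have hcoe : ∀ P : Polynomial ℚ,
      ((algebraMap (Polynomial ℚ) (RatFunc ℚ) P : RatFunc ℚ) : LaurentSeries ℚ)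
        = ((P : PowerSeries ℚ) : LaurentSeries ℚ) := by
    intro P
    rw [RatFunc.coe_coe]
    rfl
  have hL : ((P₁ : PowerSeries ℚ) : LaurentSeries ℚ) * (fOne : LaurentSeries ℚ)
      + ((P₂ : PowerSeries ℚ) : LaurentSeries ℚ) * (fTwo : LaurentSeries ℚ) = 0 := by
    have h3 := congrArg (fun z =>
      ((algebraMap (Polynomial ℚ) (RatFunc ℚ) Dq : RatFunc ℚ) : LaurentSeries ℚ) * z) h
    simp only [mul_add, ← mul_assoc, ← map_mul, e₁, e₂, mul_zero] at h3
    rw [hcoe, hcoe] at h3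
    exact h3
  have hPS : (P₁ : PowerSeries ℚ) * fOne + (P₂ : PowerSeries ℚ) * fTwo = 0 := by
    apply HahnSeries.ofPowerSeries_injective (R := ℚ) (Γ := ℤ)
    rw [map_add, map_mul, map_mul, map_zero]
    exact hL
  have hrel : (((P₂ - P₁) * (1 - Polynomial.X) : Polynomial ℚ) : PowerSeries ℚ) * fOne
      = (P₂ : PowerSeries ℚ) := by
    rw [Polynomial.coe_mul, Polynomial.coe_sub, Polynomial.coe_sub, Polynomial.coe_one,
      Polynomial.coe_X]
    linear_combination (-(1 - PowerSeries.X)) * hPS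
      + (1 - PowerSeries.X) * (P₂ : PowerSeries ℚ) * sum_fOne_fTwo
      + (P₂ : PowerSeries ℚ) * geo_mul
  have hq0 := no_poly_relation _ _ hrel
  have h1X : (1 - Polynomial.X : Polynomial ℚ) ≠ 0 := fun hc => by
    simpa using congrArg (Polynomial.eval 0) hc
  have hP12 : P₂ = P₁ := by
    rcases mul_eq_zero.1 hq0 with h' | h'
    · exact sub_eq_zero.1 h'
    · exact absurd h' h1X
  have hP2 : P₂ = 0 := by
    have : ((P₂ : Polynomial ℚ) : PowerSeries ℚ) = 0 := by
      rw [← hrel, hq0]; simp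
    exact Polynomial.coe_eq_zero_iff.1 this
  have hP1 : P₁ = 0 := hP12 ▸ hP2
  constructor
  · apply RatFunc.num_eq_zero_iff.1
    rcases mul_eq_zero.1 hP1 with h' | h'
    · exact h'
    · exact absurd h' (RatFunc.denom_ne_zero w₂)
  · apply RatFunc.num_eq_zero_iff.1
    rcases mul_eq_zero.1 hP2 with h' | h'
    · exact h'
    · exact absurd h' (RatFunc.denom_ne_zero w₁)
end
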